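/- Let n ≥ 3 and k ≥ 1 be integers. Then the independence number of the perfect semiregular tree T_{n,k}, i.e. the maximum cardinality of an independent set of vertices of T_{n,k}, equals ((n−1)^{k+1} − 1)/(n − 2). -/

import Mathlib

open MvPolynomial

/-- Level sizes of the perfect semiregular tree `T_{n,k}`. -/
def semiLevel (n : ℕ) : ℕ → ℕ
  | 0 => 1
  | a + 1 => n * (n - 1) ^ a

/-- Vertices of the perfect semiregular tree `T_{n,k}`. -/
abbrev SemiVert (n k : ℕ) : Type := Σ a : Fin (k + 1), Fin (semiLevel n (a : ℕ))

/-- The perfect semiregular tree `T_{n,k}`: every internal (non-pendant) vertex has degree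
`n` and every pendant vertex is at distance `k` from the root.  The vertex `j` at level
`a+1` is a child of vertex `j/(n-1)` at level `a` (of the root when `a = 0`). -/
def semiTree (n k : ℕ) : SimpleGraph (SemiVert n k) :=
  SimpleGraph.fromRel (fun v w =>
    (v.1 : ℕ) + 1 = (w.1 : ℕ) ∧ ((v.1 : ℕ) = 0 ∨ (v.2 : ℕ) = (w.2 : ℕ) / (n - 1)))

/-- A set of vertices is independent if it contains no pair of adjacent vertices. -/
def IsIndepSet {V : Type} (G : SimpleGraph V) (W : Set V) : Prop :=
  ∀ v ∈ W, ∀ w ∈ W, ¬ G.Adj v w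

/-- The independence number of a graph: the maximum size of an independent set. -/
noncomputable def indepNum {V : Type} (G : SimpleGraph V) : ℕ :=
  sSup {d | ∃ W : Finset V, IsIndepSet G (W : Set V) ∧ W.card = d}

-- vertex extensionality
lemma SemiVert.ext' {n k : ℕ} {v w : SemiVert n k} (h1 : (v.1 : ℕ) = (w.1 : ℕ))
    (h2 : (v.2 : ℕ) = (w.2 : ℕ)) : v = w := by
  obtain ⟨⟨a, ha⟩, ⟨i, hi⟩⟩ := v
  obtain ⟨⟨b, hb⟩, ⟨j, hj⟩⟩ := w
  simp only [Fin.val_mk] at h1 h2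
  subst h1; subst h2; rfl

lemma adj_levels {n k : ℕ} {v w : SemiVert n k} (h : (semiTree n k).Adj v w) :
    (v.1 : ℕ) + 1 = (w.1 : ℕ) ∨ (w.1 : ℕ) + 1 = (v.1 : ℕ) := by
  rw [semiTree, SimpleGraph.fromRel_adj] at h
  rcases h.2 with ⟨h', _⟩ | ⟨h', _⟩
  · exact Or.inl h'
  · exact Or.inr h'

lemma semiLevel_mul_le (n : ℕ) (hn : 3 ≤ n) (a : ℕ) :
    semiLevel n a * (n - 1) ≤ semiLevel n (a + 1) := by
  cases a with
  | zero => simp [semiLevel]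
  | succ b =>
    simp only [semiLevel, pow_succ]
    ring_nf
    exact le_rfl



lemma semiLevel_pos (n : ℕ) (hn : 3 ≤ n) (a : ℕ) : 0 < semiLevel n a := by
  cases a with
  | zero => simp [semiLevel]
  | succ b => exact Nat.mul_pos (by omega) (Nat.pow_pos (by omega))

-- the designated child exists
lemma child_lt {n k : ℕ} (hn : 3 ≤ n) (v : SemiVert n k) :
    (v.2 : ℕ) * (n - 1) < semiLevel n ((v.1 : ℕ) + 1) := by
  calc (v.2 : ℕ) * (n - 1) < semiLevel n (v.1 : ℕ) * (n - 1) :=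
        (Nat.mul_lt_mul_right (show 0 < n - 1 by omega)).mpr v.2.isLt
    _ ≤ semiLevel n ((v.1 : ℕ) + 1) := semiLevel_mul_le n hn _

-- the child is adjacent to its parent
lemma adj_child {n k : ℕ} (hn : 3 ≤ n) (v : SemiVert n k) (h : (v.1 : ℕ) < k) :
    (semiTree n k).Adj v ⟨⟨(v.1 : ℕ) + 1, by omega⟩, ⟨(v.2 : ℕ) * (n - 1), child_lt hn v⟩⟩ := by
  rw [semiTree, SimpleGraph.fromRel_adj]
  constructor
  · intro he
    have := congrArg (fun x : SemiVert n k => (x.1 : ℕ)) he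
    simp at this
  · left
    refine ⟨by simp, ?_⟩
    rcases Nat.eq_zero_or_pos (v.1 : ℕ) with h0 | h0
    · exact Or.inl h0
    · right
      rw [Nat.mul_div_cancel _ (show 0 < n - 1 by omega)]



/-- The maximum independent set: all vertices at levels of the same parity as `k`. -/
def semiSet (n k : ℕ) : Finset (SemiVert n k) :=
  (Finset.univ.filter fun a : Fin (k + 1) => (a : ℕ) % 2 = k % 2).sigma fun _ => Finset.univ

lemma mem_semiSet {n k : ℕ} (v : SemiVert n k) :
    v ∈ semiSet n k ↔ (v.1 : ℕ) % 2 = k % 2 := by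
  simp [semiSet]

lemma semiSet_indep (n k : ℕ) : IsIndepSet (semiTree n k) ((semiSet n k : Finset _) : Set _) := by
  intro v hv w hw hadj
  simp only [Finset.mem_coe, mem_semiSet] at hv hw
  rcases adj_levels hadj with h | h <;> omega

lemma indep_card_le {n k : ℕ} (hn : 3 ≤ n) (W : Finset (SemiVert n k))
    (hW : IsIndepSet (semiTree n k) (W : Set _)) : W.card ≤ (semiSet n k).card := by
  classical
  apply Finset.card_le_card_of_injOn
    (fun v => if h : (v.1 : ℕ) % 2 = k % 2 then v
      else ⟨⟨(v.1 : ℕ) + 1, by have := v.1.isLt; omega⟩, ⟨(v.2 : ℕ) * (n - 1), child_lt hn v⟩⟩)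
  · intro v _
    by_cases h : (v.1 : ℕ) % 2 = k % 2
    · simpa [h, mem_semiSet] using h
    · simp only [Finset.mem_coe]
      rw [dif_neg h, mem_semiSet]
      simp only [Fin.val_mk]
      omega
  · intro v hv w hw he
    simp only at he
    by_cases h1 : (v.1 : ℕ) % 2 = k % 2 <;> by_cases h2 : (w.1 : ℕ) % 2 = k % 2
    · rwa [dif_pos h1, dif_pos h2] at he
    · -- v = child of w : contradiction with independence
      rw [dif_pos h1, dif_neg h2] at he
      exfalso
      have hwk : (w.1 : ℕ) < k := by have := w.1.isLt; omega
      have := adj_child hn w hwk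
      rw [← he] at this
      exact hW w hw v hv this
    · rw [dif_neg h1, dif_pos h2] at he
      exfalso
      have hvk : (v.1 : ℕ) < k := by have := v.1.isLt; omega
      have := adj_child hn v hvk
      rw [he] at this
      exact hW v hv w hw this
    · rw [dif_neg h1, dif_neg h2] at he
      have e1 : (v.1 : ℕ) = (w.1 : ℕ) := by
        have := congrArg (fun x : SemiVert n k => (x.1 : ℕ)) he
        simpa using this
      have e2 : (v.2 : ℕ) * (n - 1) = (w.2 : ℕ) * (n - 1) := by
        have := congrArg (fun x : SemiVert n k => (x.2 : ℕ)) he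
        simpa using this
      exact SemiVert.ext' e1 (Nat.eq_of_mul_eq_mul_right (by omega) e2)



lemma semiSet_card (n k : ℕ) :
    (semiSet n k).card = ∑ a ∈ Finset.range (k + 1),
      (if a % 2 = k % 2 then semiLevel n a else 0) := by
  classical
  rw [semiSet, Finset.card_sigma]
  simp only [Finset.card_univ, Fintype.card_fin]
  rw [Finset.sum_filter]
  exact Fin.sum_univ_eq_sum_range (fun a => if a % 2 = k % 2 then semiLevel n a else 0) (k + 1)

lemma sum_formula (n : ℕ) (hn : 3 ≤ n) (k : ℕ) :
    ((∑ a ∈ Finset.range (k + 1), (if a % 2 = k % 2 then semiLevel n a else 0) : ℕ) : ℚ) =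
      (((n : ℚ) - 1) ^ (k + 1) - 1) / ((n : ℚ) - 2) := by
  have hn2 : ((n : ℚ) - 2) ≠ 0 := by
    have : (3 : ℚ) ≤ (n : ℚ) := by exact_mod_cast hn
    linarith
  rw [eq_div_iff hn2]
  induction k using Nat.twoStepInduction with
  | zero =>
    simp [semiLevel]
    ring
  | one =>
    rw [Finset.sum_range_succ, Finset.sum_range_succ]
    norm_num [semiLevel]
    push_cast [Nat.cast_sub (show 1 ≤ n by omega)]
    ring
  | more k ih _ =>
    rw [show k + 2 + 1 = (k + 1) + 1 + 1 by rfl, Finset.sum_range_succ, Finset.sum_range_succ]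
    have hpar : ∀ a, (a % 2 = (k + 2) % 2) = (a % 2 = k % 2) := by
      intro a; apply propext; omega
    simp only [hpar]
    have h1 : ¬((k + 1) % 2 = k % 2) := by omega
    have h2 : (k + 2) % 2 = k % 2 := by omega
    rw [if_neg h1, if_pos trivial, add_zero, Nat.cast_add, add_mul, ih]
    have hc : ((semiLevel n (k + 2) : ℕ) : ℚ) = (n : ℚ) * ((n : ℚ) - 1) ^ (k + 1) := by
      show (((n * (n - 1) ^ (k + 1) : ℕ)) : ℚ) = _
      push_cast [Nat.cast_sub (show 1 ≤ n by omega)]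
      ring
    rw [hc]
    ring



theorem indepNum_semiTree (n k : ℕ) (hn : 3 ≤ n) (hk : 1 ≤ k) :
    (indepNum (semiTree n k) : ℚ) = (((n : ℚ) - 1) ^ (k + 1) - 1) / ((n : ℚ) - 2) := by
  have hmain : indepNum (semiTree n k) = (semiSet n k).card := by
    apply IsGreatest.csSup_eq
    constructor
    · exact ⟨semiSet n k, semiSet_indep n k, rfl⟩
    · rintro d ⟨W, hW, rfl⟩
      exact indep_card_le hn W hW
  rw [hmain, semiSet_card]
  exact sum_formula n hn k
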